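/- Assume additionally D3 < max(D1, D2), so that σT1 + σT2 > 0. Let α1 = σ²/(σ² + s0 + s1), α2 = σ²/(σ² + s0 + s2), β1 = σ²·σT2/((σT1 + σT2)·(σ² + s0)), and β2 = σ²·σT1/((σT1 + σT2)·(σ² + s0)). Then the side and central reconstruction errors achieve exactly the target distortions: E[(X − α1·U1)²] = D1, E[(X − α2·U2)²] = D2, and E[(X − β1·U1 − β2·U2)²] = D3. -/

import Mathlib

open MeasureTheory ProbabilityTheory

private lemma mul_int {Ω : Type*} [MeasurableSpace Ω] {μ : Measure Ω} {f g : Ω → ℝ}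
    (hf : MemLp f 2 μ) (hg : MemLp g 2 μ) : Integrable (fun ω => f ω * g ω) μ := by
  have h : MemLp (f • g) 1 μ := hg.smul hf
  exact memLp_one_iff_integrable.mp h

private lemma expand_sq {Ω : Type*} [MeasurableSpace Ω] (μ : Measure Ω)
    (f g h k : Ω → ℝ) (a b c d : ℝ)
    (hf2 : Integrable (fun ω => f ω ^ 2) μ) (hg2 : Integrable (fun ω => g ω ^ 2) μ)
    (hh2 : Integrable (fun ω => h ω ^ 2) μ) (hk2 : Integrable (fun ω => k ω ^ 2) μ)
    (hfg : Integrable (fun ω => f ω * g ω) μ) (hfh : Integrable (fun ω => f ω * h ω) μ)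
    (hfk : Integrable (fun ω => f ω * k ω) μ) (hgh : Integrable (fun ω => g ω * h ω) μ)
    (hgk : Integrable (fun ω => g ω * k ω) μ) (hhk : Integrable (fun ω => h ω * k ω) μ) :
    ∫ ω, (a * f ω + b * g ω + c * h ω + d * k ω) ^ 2 ∂μ =
      a ^ 2 * ∫ ω, f ω ^ 2 ∂μ + b ^ 2 * ∫ ω, g ω ^ 2 ∂μ + c ^ 2 * ∫ ω, h ω ^ 2 ∂μ
      + d ^ 2 * ∫ ω, k ω ^ 2 ∂μ + 2 * a * b * ∫ ω, f ω * g ω ∂μ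
      + 2 * a * c * ∫ ω, f ω * h ω ∂μ + 2 * a * d * ∫ ω, f ω * k ω ∂μ
      + 2 * b * c * ∫ ω, g ω * h ω ∂μ + 2 * b * d * ∫ ω, g ω * k ω ∂μ
      + 2 * c * d * ∫ ω, h ω * k ω ∂μ := by
  have i1 : Integrable (fun ω => a ^ 2 * f ω ^ 2) μ := hf2.const_mul _
  have i2 : Integrable (fun ω => b ^ 2 * g ω ^ 2) μ := hg2.const_mul _
  have i3 : Integrable (fun ω => c ^ 2 * h ω ^ 2) μ := hh2.const_mul _
  have i4 : Integrable (fun ω => d ^ 2 * k ω ^ 2) μ := hk2.const_mul _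
  have i5 : Integrable (fun ω => 2 * a * b * (f ω * g ω)) μ := hfg.const_mul _
  have i6 : Integrable (fun ω => 2 * a * c * (f ω * h ω)) μ := hfh.const_mul _
  have i7 : Integrable (fun ω => 2 * a * d * (f ω * k ω)) μ := hfk.const_mul _
  have i8 : Integrable (fun ω => 2 * b * c * (g ω * h ω)) μ := hgh.const_mul _
  have i9 : Integrable (fun ω => 2 * b * d * (g ω * k ω)) μ := hgk.const_mul _
  have i10 : Integrable (fun ω => 2 * c * d * (h ω * k ω)) μ := hhk.const_mul _
  have e : (fun ω => (a * f ω + b * g ω + c * h ω + d * k ω) ^ 2) =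
      (fun ω => a ^ 2 * f ω ^ 2) + ((fun ω => b ^ 2 * g ω ^ 2) + ((fun ω => c ^ 2 * h ω ^ 2) +
      ((fun ω => d ^ 2 * k ω ^ 2) + ((fun ω => 2 * a * b * (f ω * g ω)) +
      ((fun ω => 2 * a * c * (f ω * h ω)) + ((fun ω => 2 * a * d * (f ω * k ω)) +
      ((fun ω => 2 * b * c * (g ω * h ω)) + ((fun ω => 2 * b * d * (g ω * k ω)) +
      (fun ω => 2 * c * d * (h ω * k ω)))))))))) := by
    funext ω; simp only [Pi.add_apply]; ring
  rw [show ∫ ω, (a * f ω + b * g ω + c * h ω + d * k ω) ^ 2 ∂μ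
      = ∫ ω, ((fun ω => a ^ 2 * f ω ^ 2) + ((fun ω => b ^ 2 * g ω ^ 2) +
        ((fun ω => c ^ 2 * h ω ^ 2) +
        ((fun ω => d ^ 2 * k ω ^ 2) + ((fun ω => 2 * a * b * (f ω * g ω)) +
        ((fun ω => 2 * a * c * (f ω * h ω)) + ((fun ω => 2 * a * d * (f ω * k ω)) +
        ((fun ω => 2 * b * c * (g ω * h ω)) + ((fun ω => 2 * b * d * (g ω * k ω)) +
        (fun ω => 2 * c * d * (h ω * k ω))))))))))) ω ∂μ from by rw [← e]]
  rw [integral_add' i1 (i2.add (i3.add (i4.add (i5.add (i6.add (i7.add (i8.add (i9.add i10)))))))),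
      integral_add' i2 (i3.add (i4.add (i5.add (i6.add (i7.add (i8.add (i9.add i10))))))),
      integral_add' i3 (i4.add (i5.add (i6.add (i7.add (i8.add (i9.add i10)))))),
      integral_add' i4 (i5.add (i6.add (i7.add (i8.add (i9.add i10))))),
      integral_add' i5 (i6.add (i7.add (i8.add (i9.add i10)))),
      integral_add' i6 (i7.add (i8.add (i9.add i10))),
      integral_add' i7 (i8.add (i9.add i10)),
      integral_add' i8 (i9.add i10),
      integral_add' i9 i10,
      integral_const_mul, integral_const_mul, integral_const_mul, integral_const_mul,
      integral_const_mul, integral_const_mul, integral_const_mul, integral_const_mul,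
      integral_const_mul, integral_const_mul]
  ring

private lemma smono (σ2 a b : ℝ) (hσ : 0 < σ2) (ha : 0 < a) (hab : a < b) (hb : b < σ2) :
    a * σ2 / (σ2 - a) < b * σ2 / (σ2 - b) := by
  have h1 : (0:ℝ) < σ2 - a := by linarith
  have h2 : (0:ℝ) < σ2 - b := by linarith
  rw [div_lt_div_iff₀ h1 h2]
  nlinarith [mul_lt_mul_of_pos_right hab (mul_pos hσ hσ)]

private lemma beta_sum (σ2 s0 r1 r2 : ℝ) (hr : r1 + r2 ≠ 0) (hs : σ2 + s0 ≠ 0) :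
    σ2 * r2 / ((r1 + r2) * (σ2 + s0)) + σ2 * r1 / ((r1 + r2) * (σ2 + s0)) = σ2 / (σ2 + s0) := by
  field_simp
  ring

private lemma beta_cross (σ2 s0 r1 r2 : ℝ) (hr : r1 + r2 ≠ 0) (hs : σ2 + s0 ≠ 0) :
    (σ2 * r2 / ((r1 + r2) * (σ2 + s0))) ^ 2 * r1 ^ 2
      + (σ2 * r1 / ((r1 + r2) * (σ2 + s0))) ^ 2 * r2 ^ 2
      + 2 * (σ2 * r2 / ((r1 + r2) * (σ2 + s0))) * (σ2 * r1 / ((r1 + r2) * (σ2 + s0)))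
        * (-(r1 * r2)) = 0 := by
  field_simp
  ring

private lemma side_dist (σ2 D t : ℝ) (hσ : 0 < σ2) (hD : 0 < D) (hDσ : D < σ2)
    (ht : t = D * σ2 / (σ2 - D)) (α : ℝ) (hα : α = σ2 / (σ2 + t)) :
    (1 - α) ^ 2 * σ2 + α ^ 2 * t = D := by
  have h1 : σ2 - D ≠ 0 := ne_of_gt (by linarith)
  have hσ' : σ2 ≠ 0 := ne_of_gt hσ
  have hst : σ2 + t = σ2 ^ 2 / (σ2 - D) := by rw [ht]; field_simp; ring
  have hαv : α = (σ2 - D) / σ2 := by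
    rw [hα, hst]; field_simp
  rw [hαv, ht]
  field_simp
  ring

/-- The side and central reconstructions of the Gaussian MD test channel achieve
exactly the target distortions: `E[(X − α1·U1)²] = D1`, `E[(X − α2·U2)²] = D2`,
and `E[(X − β1·U1 − β2·U2)²] = D3`. -/
theorem gaussian_reconstruction_distortions
    {Ω : Type*} [MeasurableSpace Ω] (μ : Measure Ω) [IsProbabilityMeasure μ]
    (σ2 D1 D2 D3 s0 s1 s2 : ℝ)
    (hσ : 0 < σ2)
    (hD3pos : 0 < D3) (hD3leD1 : D3 ≤ D1) (hD1 : D1 < σ2)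
    (hD3leD2 : D3 ≤ D2) (hD2 : D2 < σ2)
    (hs0 : s0 = D3 * σ2 / (σ2 - D3))
    (hs1 : s1 = D1 * σ2 / (σ2 - D1) - s0)
    (hs2 : s2 = D2 * σ2 / (σ2 - D2) - s0)
    (hmax : D3 < max D1 D2)
    (X T0 T1 T2 : Ω → ℝ)
    (hX2 : MemLp X 2 μ) (hT02 : MemLp T0 2 μ) (hT12 : MemLp T1 2 μ) (hT22 : MemLp T2 2 μ)
    (hXmean : ∫ ω, X ω ∂μ = 0) (hT0mean : ∫ ω, T0 ω ∂μ = 0)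
    (hT1mean : ∫ ω, T1 ω ∂μ = 0) (hT2mean : ∫ ω, T2 ω ∂μ = 0)
    (hXvar : ∫ ω, (X ω) ^ 2 ∂μ = σ2)
    (hT0var : ∫ ω, (T0 ω) ^ 2 ∂μ = s0)
    (hT1var : ∫ ω, (T1 ω) ^ 2 ∂μ = s1)
    (hT2var : ∫ ω, (T2 ω) ^ 2 ∂μ = s2)
    (hT1T2 : ∫ ω, T1 ω * T2 ω ∂μ = -(Real.sqrt s1 * Real.sqrt s2))
    -- `X`, `T0` and the pair `(T1, T2)` are mutually independent
    (hIndep1 : IndepFun X T0 μ)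
    (hIndep2 : IndepFun (fun ω => (X ω, T0 ω)) (fun ω => (T1 ω, T2 ω)) μ)
    (U1 U2 : Ω → ℝ)
    (hU1 : U1 = fun ω => X ω + T0 ω + T1 ω)
    (hU2 : U2 = fun ω => X ω + T0 ω + T2 ω)
    (α1 α2 β1 β2 : ℝ)
    (hα1 : α1 = σ2 / (σ2 + s0 + s1))
    (hα2 : α2 = σ2 / (σ2 + s0 + s2))
    (hβ1 : β1 = σ2 * Real.sqrt s2 / ((Real.sqrt s1 + Real.sqrt s2) * (σ2 + s0)))
    (hβ2 : β2 = σ2 * Real.sqrt s1 / ((Real.sqrt s1 + Real.sqrt s2) * (σ2 + s0))) :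
    (∫ ω, (X ω - α1 * U1 ω) ^ 2 ∂μ = D1) ∧
    (∫ ω, (X ω - α2 * U2 ω) ^ 2 ∂μ = D2) ∧
    (∫ ω, (X ω - β1 * U1 ω - β2 * U2 ω) ^ 2 ∂μ = D3) := by
  -- integrability
  have iX : Integrable X μ := hX2.integrable one_le_two
  have iT0 : Integrable T0 μ := hT02.integrable one_le_two
  have iT1 : Integrable T1 μ := hT12.integrable one_le_two
  have iT2 : Integrable T2 μ := hT22.integrable one_le_two
  have iX2 : Integrable (fun ω => X ω ^ 2) μ := hX2.integrable_sq
  have iT02 : Integrable (fun ω => T0 ω ^ 2) μ := hT02.integrable_sq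
  have iT12 : Integrable (fun ω => T1 ω ^ 2) μ := hT12.integrable_sq
  have iT22 : Integrable (fun ω => T2 ω ^ 2) μ := hT22.integrable_sq
  have iXT0 : Integrable (fun ω => X ω * T0 ω) μ := mul_int hX2 hT02
  have iXT1 : Integrable (fun ω => X ω * T1 ω) μ := mul_int hX2 hT12
  have iXT2 : Integrable (fun ω => X ω * T2 ω) μ := mul_int hX2 hT22
  have iT0T1 : Integrable (fun ω => T0 ω * T1 ω) μ := mul_int hT02 hT12
  have iT0T2 : Integrable (fun ω => T0 ω * T2 ω) μ := mul_int hT02 hT22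
  have iT1T2 : Integrable (fun ω => T1 ω * T2 ω) μ := mul_int hT12 hT22
  -- pairwise independences
  have indXT1 : IndepFun X T1 μ := hIndep2.comp measurable_fst measurable_fst
  have indXT2 : IndepFun X T2 μ := hIndep2.comp measurable_fst measurable_snd
  have indT0T1 : IndepFun T0 T1 μ := hIndep2.comp measurable_snd measurable_fst
  have indT0T2 : IndepFun T0 T2 μ := hIndep2.comp measurable_snd measurable_snd
  -- vanishing cross moments
  have eXT0 : ∫ ω, X ω * T0 ω ∂μ = 0 := by
    have h := hIndep1.integral_mul_eq_mul_integral iX.1 iT0.1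
    simpa [hXmean] using h
  have eXT1 : ∫ ω, X ω * T1 ω ∂μ = 0 := by
    have h := indXT1.integral_mul_eq_mul_integral iX.1 iT1.1
    simpa [hXmean] using h
  have eXT2 : ∫ ω, X ω * T2 ω ∂μ = 0 := by
    have h := indXT2.integral_mul_eq_mul_integral iX.1 iT2.1
    simpa [hXmean] using h
  have eT0T1 : ∫ ω, T0 ω * T1 ω ∂μ = 0 := by
    have h := indT0T1.integral_mul_eq_mul_integral iT0.1 iT1.1
    simpa [hT0mean] using h
  have eT0T2 : ∫ ω, T0 ω * T2 ω ∂μ = 0 := by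
    have h := indT0T2.integral_mul_eq_mul_integral iT0.1 iT2.1
    simpa [hT0mean] using h
  -- positivity facts
  have hσD1 : (0:ℝ) < σ2 - D1 := by linarith
  have hσD2 : (0:ℝ) < σ2 - D2 := by linarith
  have hσD3 : (0:ℝ) < σ2 - D3 := by linarith
  have hs0pos : 0 < s0 := by rw [hs0]; positivity
  have hmono : ∀ a b : ℝ, 0 < a → a ≤ b → b < σ2 →
      a * σ2 / (σ2 - a) ≤ b * σ2 / (σ2 - b) := by
    intro a b ha hab hb
    have h1 : (0:ℝ) < σ2 - a := by linarith
    have h2 : (0:ℝ) < σ2 - b := by linarith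
    rw [div_le_div_iff₀ h1 h2]
    nlinarith [mul_le_mul_of_nonneg_right hab (mul_nonneg hσ.le hσ.le)]
  have hs1nn : 0 ≤ s1 := by
    rw [hs1, hs0, sub_nonneg]; exact hmono D3 D1 hD3pos hD3leD1 hD1
  have hs2nn : 0 ≤ s2 := by
    rw [hs2, hs0, sub_nonneg]; exact hmono D3 D2 hD3pos hD3leD2 hD2
  have hr1 : Real.sqrt s1 ^ 2 = s1 := Real.sq_sqrt hs1nn
  have hr2 : Real.sqrt s2 ^ 2 = s2 := Real.sq_sqrt hs2nn
  -- the three moments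
  have M1 : ∫ ω, (X ω - α1 * U1 ω) ^ 2 ∂μ
      = (1 - α1) ^ 2 * σ2 + α1 ^ 2 * s0 + α1 ^ 2 * s1 := by
    have e : ∫ ω, (X ω - α1 * U1 ω) ^ 2 ∂μ
        = ∫ ω, ((1 - α1) * X ω + (-α1) * T0 ω + (-α1) * T1 ω + 0 * T2 ω) ^ 2 ∂μ := by
      congr 1; funext ω; rw [hU1]; ring
    rw [e, expand_sq μ X T0 T1 T2 _ _ _ _ iX2 iT02 iT12 iT22 iXT0 iXT1 iXT2 iT0T1 iT0T2 iT1T2,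
      hXvar, hT0var, hT1var, hT2var, eXT0, eXT1, eXT2, eT0T1, eT0T2, hT1T2]
    ring
  have M2 : ∫ ω, (X ω - α2 * U2 ω) ^ 2 ∂μ
      = (1 - α2) ^ 2 * σ2 + α2 ^ 2 * s0 + α2 ^ 2 * s2 := by
    have e : ∫ ω, (X ω - α2 * U2 ω) ^ 2 ∂μ
        = ∫ ω, ((1 - α2) * X ω + (-α2) * T0 ω + 0 * T1 ω + (-α2) * T2 ω) ^ 2 ∂μ := by
      congr 1; funext ω; rw [hU2]; ring
    rw [e, expand_sq μ X T0 T1 T2 _ _ _ _ iX2 iT02 iT12 iT22 iXT0 iXT1 iXT2 iT0T1 iT0T2 iT1T2,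
      hXvar, hT0var, hT1var, hT2var, eXT0, eXT1, eXT2, eT0T1, eT0T2, hT1T2]
    ring
  have M3 : ∫ ω, (X ω - β1 * U1 ω - β2 * U2 ω) ^ 2 ∂μ
      = (1 - β1 - β2) ^ 2 * σ2 + (β1 + β2) ^ 2 * s0 + β1 ^ 2 * s1 + β2 ^ 2 * s2
        + 2 * β1 * β2 * (-(Real.sqrt s1 * Real.sqrt s2)) := by
    have e : ∫ ω, (X ω - β1 * U1 ω - β2 * U2 ω) ^ 2 ∂μ
        = ∫ ω, ((1 - β1 - β2) * X ω + (-(β1 + β2)) * T0 ω + (-β1) * T1 ω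
            + (-β2) * T2 ω) ^ 2 ∂μ := by
      congr 1; funext ω; rw [hU1, hU2]; ring
    rw [e, expand_sq μ X T0 T1 T2 _ _ _ _ iX2 iT02 iT12 iT22 iXT0 iXT1 iXT2 iT0T1 iT0T2 iT1T2,
      hXvar, hT0var, hT1var, hT2var, eXT0, eXT1, eXT2, eT0T1, eT0T2, hT1T2]
    ring
  -- algebra
  have ht1 : s0 + s1 = D1 * σ2 / (σ2 - D1) := by rw [hs1]; ring
  have ht2 : s0 + s2 = D2 * σ2 / (σ2 - D2) := by rw [hs2]; ring
  refine ⟨?_, ?_, ?_⟩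
  · rw [M1]
    have h := side_dist σ2 D1 (s0 + s1) hσ (lt_of_lt_of_le hD3pos hD3leD1) hD1 ht1 α1
      (by rw [hα1]; ring_nf)
    linear_combination h
  · rw [M2]
    have h := side_dist σ2 D2 (s0 + s2) hσ (lt_of_lt_of_le hD3pos hD3leD2) hD2 ht2 α2
      (by rw [hα2]; ring_nf)
    linear_combination h
  · rw [M3]
    set r1 := Real.sqrt s1 with hr1def
    set r2 := Real.sqrt s2 with hr2def
    have hrpos : 0 < r1 + r2 := by
      rcases max_cases D1 D2 with ⟨hm, _⟩ | ⟨hm, _⟩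
      · have hlt : D3 < D1 := by rwa [hm] at hmax
        have hp : 0 < s1 := by
          rw [hs1, hs0, sub_pos]
          exact smono σ2 D3 D1 hσ hD3pos hlt hD1
        have h1 : 0 < r1 := Real.sqrt_pos.mpr hp
        have h2 : 0 ≤ r2 := Real.sqrt_nonneg _
        linarith
      · have hlt : D3 < D2 := by rwa [hm] at hmax
        have hp : 0 < s2 := by
          rw [hs2, hs0, sub_pos]
          exact smono σ2 D3 D2 hσ hD3pos hlt hD2
        have h2 : 0 < r2 := Real.sqrt_pos.mpr hp
        have h1 : 0 ≤ r1 := Real.sqrt_nonneg _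
        linarith
    have hs0σ : 0 < σ2 + s0 := by linarith
    have hβsum : β1 + β2 = σ2 / (σ2 + s0) := by
      rw [hβ1, hβ2]
      exact beta_sum σ2 s0 r1 r2 (ne_of_gt hrpos) (ne_of_gt hs0σ)
    have hcross : β1 ^ 2 * s1 + β2 ^ 2 * s2 + 2 * β1 * β2 * (-(r1 * r2)) = 0 := by
      rw [hβ1, hβ2, ← hr1, ← hr2]
      exact beta_cross σ2 s0 r1 r2 (ne_of_gt hrpos) (ne_of_gt hs0σ)
    have hside2 : (1 - (β1 + β2)) ^ 2 * σ2 + (β1 + β2) ^ 2 * s0 = D3 :=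
      side_dist σ2 D3 s0 hσ hD3pos (by linarith) hs0 (β1 + β2) hβsum
    linear_combination hside2 + hcross
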